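/- Let J be a fixed real n×n matrix and let M, Ω : ℝ → (real n×n matrices) satisfy, for every t ∈ ℝ: M(t) = Ω(t)·J + J·Ω(t), and M is differentiable at t with derivative M(t)·Ω(t) − Ω(t)·M(t). Then for every λ ∈ ℝ and every natural number k, the function t ↦ trace((M(t) + λ·J²)^k) is constant on ℝ; that is, the functions f_{λ,k}(M) = Tr((M + λJ²)^k) are first integrals of the Euler equations. -/

import Mathlib

open Matrix

attribute [local instance] Matrix.normedAddCommGroup Matrix.normedSpace

noncomputable def matMulCLM (n : ℕ) :
    Matrix (Fin n) (Fin n) ℝ →L[ℝ] Matrix (Fin n) (Fin n) ℝ →L[ℝ] Matrix (Fin n) (Fin n) ℝ :=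
  LinearMap.toContinuousLinearMap
  { toFun := fun a => LinearMap.toContinuousLinearMap (LinearMap.mulLeft ℝ a)
    map_add' := by intro a b; ext x; simp [add_mul]
    map_smul' := by intro c a; ext x; simp [smul_mul_assoc] }

lemma matMulCLM_apply {n : ℕ} (a b : Matrix (Fin n) (Fin n) ℝ) :
    matMulCLM n a b = a * b := rfl

lemma HasDerivAt.matMul {n : ℕ} {f g : ℝ → Matrix (Fin n) (Fin n) ℝ}
    {f' g' : Matrix (Fin n) (Fin n) ℝ} {t : ℝ}
    (hf : HasDerivAt f f' t) (hg : HasDerivAt g g' t) :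
    HasDerivAt (fun u => f u * g u) (f t * g' + f' * g t) t := by
  have h := (matMulCLM n).hasDerivAt_of_bilinear (fun _ => hf) (fun _ => hg)
  exact h

lemma lax_pow {n : ℕ} {f b : ℝ → Matrix (Fin n) (Fin n) ℝ} {t : ℝ}
    (hf : HasDerivAt f (f t * b t - b t * f t) t) (k : ℕ) :
    HasDerivAt (fun s => f s ^ k) (f t ^ k * b t - b t * f t ^ k) t := by
  induction k with
  | zero => simp; exact hasDerivAt_const t _
  | succ k ih =>
    have h := ih.matMul hf
    simp only [pow_succ]
    convert h using 1
    noncomm_ring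

theorem trace_power_first_integral (n : ℕ) (J : Matrix (Fin n) (Fin n) ℝ)
    (M Ω : ℝ → Matrix (Fin n) (Fin n) ℝ)
    (hM : ∀ t : ℝ, M t = Ω t * J + J * Ω t)
    (hderiv : ∀ t : ℝ, HasDerivAt M (M t * Ω t - Ω t * M t) t) :
    ∀ (lam : ℝ) (k : ℕ) (s t : ℝ),
      ((M s + lam • (J * J)) ^ k).trace = ((M t + lam • (J * J)) ^ k).trace := by
  intro lam k s t
  set N : ℝ → Matrix (Fin n) (Fin n) ℝ := fun u => M u + lam • (J * J) with hNdef
  set B : ℝ → Matrix (Fin n) (Fin n) ℝ := fun u => Ω u + lam • J with hBdef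
  have hN : ∀ u : ℝ, HasDerivAt N (N u * B u - B u * N u) u := by
    intro u
    have h1 : HasDerivAt N (M u * Ω u - Ω u * M u) u := (hderiv u).add_const _
    convert h1 using 1
    simp only [hNdef, hBdef]
    rw [hM u]
    simp only [mul_add, add_mul, smul_mul_assoc, mul_smul_comm, smul_smul, smul_add, smul_sub]
    abel_nf
    noncomm_ring
  have traceCLM : Matrix (Fin n) (Fin n) ℝ →L[ℝ] ℝ :=
    LinearMap.toContinuousLinearMap (Matrix.traceLinearMap (Fin n) ℝ ℝ)
  have hk : ∀ u : ℝ, HasDerivAt (fun s => ((N s) ^ k).trace) 0 u := by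
    intro u
    have h := (Matrix.traceLinearMap (Fin n) ℝ
        ℝ).toContinuousLinearMap.hasFDerivAt.comp_hasDerivAt u (lax_pow (hN u) k)
    have heq : (Matrix.traceLinearMap (Fin n) ℝ ℝ).toContinuousLinearMap
        (N u ^ k * B u - B u * N u ^ k) = 0 := by
      show (N u ^ k * B u - B u * N u ^ k).trace = 0
      rw [Matrix.trace_sub, Matrix.trace_mul_comm]
      ring
    replace h := h.congr_deriv heq
    exact h
  have hdiff : Differentiable ℝ (fun s => ((N s) ^ k).trace) :=
    fun u => (hk u).differentiableAt
  have hzero : ∀ u : ℝ, deriv (fun s => ((N s) ^ k).trace) u = 0 :=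
    fun u => (hk u).deriv
  exact is_const_of_deriv_eq_zero hdiff hzero s t
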